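/- arXiv:2011.04026 — 4 statements merged into one kernel-verified Lean document; each statement's English description precedes it below -/
import Mathlib

section
/- Let X ⊂ ℝ^d be compact and k a continuous kernel such that samples of f ~ GP(0, k) are almost surely continuous. Let f̃ be another almost-surely-continuous centered Gaussian process, and define pathwise posteriors (f|y)(·) = f(·) + k(·, X_n) K_{n,n}⁻¹ (y − f(X_n)) and similarly (f̃|y). Then for any coupling of f̃ and f, pointwise |(f̃|y)(x) − (f|y)(x)|² ≤ 2(1 + ‖k‖²_{C(X²)} ‖K_{n,n}⁻¹‖²_{L(ℓ^∞;ℓ¹)}) ‖f̃ − f‖²_{C(X)} for all x ∈ X. -/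
open MeasureTheory ProbabilityTheory Matrix

def IsCenteredGP {X Ω : Type*} [MeasurableSpace Ω] (P : Measure Ω)
    (f : X → Ω → ℝ) (k : X → X → ℝ) : Prop :=
  ∀ (N : ℕ) (x : Fin N → X) (c : Fin N → ℝ),
    P.map (fun ω => ∑ i, c i * f (x i) ω)
      = gaussianReal 0 (Real.toNNReal (∑ i, ∑ j, c i * c j * k (x i) (x j)))

/-- **Pointwise error bound for pathwise posteriors.** For any coupling (common probability
space) of the processes `f̃` and `f`, the squared pointwise gap between the pathwise
posteriors is bounded by
`2 (1 + ‖k‖²_{C(X²)} ‖K⁻¹‖²_{L(ℓ∞;ℓ¹)}) ‖f̃ − f‖²_{C(X)}` at every `x ∈ X`. -/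
theorem pathwise_posterior_pointwise_bound
    {d : ℕ} (X : Set (EuclideanSpace ℝ (Fin d))) (hX : IsCompact X)
    {Ω : Type*} [MeasurableSpace Ω] (P : Measure Ω) [IsProbabilityMeasure P]
    (k : EuclideanSpace ℝ (Fin d) → EuclideanSpace ℝ (Fin d) → ℝ)
    (hkcont : Continuous fun p : EuclideanSpace ℝ (Fin d) × EuclideanSpace ℝ (Fin d) => k p.1 p.2)
    (f ftil : EuclideanSpace ℝ (Fin d) → Ω → ℝ)
    (hfmeas : ∀ x, Measurable (f x)) (hftmeas : ∀ x, Measurable (ftil x))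
    (hgp : IsCenteredGP P f k)
    (ktil : EuclideanSpace ℝ (Fin d) → EuclideanSpace ℝ (Fin d) → ℝ)
    (hgptil : IsCenteredGP P ftil ktil)
    (hfc : ∀ ω, Continuous fun x => f x ω) (hftc : ∀ ω, Continuous fun x => ftil x ω)
    {n : ℕ} (Xn : Fin n → EuclideanSpace ℝ (Fin d)) (hXn : ∀ j, Xn j ∈ X)
    (y : Fin n → ℝ)
    (K : Matrix (Fin n) (Fin n) ℝ) (hK : K = Matrix.of fun i j => k (Xn i) (Xn j))
    (hKdet : IsUnit K.det)
    (kSup : ℝ) (hkSup : kSup = ⨆ p : X × X, |k p.1 p.2|)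
    (opK : ℝ)
    (hopK : opK = ⨆ v : {v : Fin n → ℝ // ∀ i, |v i| ≤ 1}, ∑ i, |K⁻¹.mulVec v i|) :
    ∀ ω, ∀ x ∈ X,
      ((ftil x ω + dotProduct (fun i => k x (Xn i))
            (K⁻¹.mulVec (y - fun j => ftil (Xn j) ω)))
        - (f x ω + dotProduct (fun i => k x (Xn i))
            (K⁻¹.mulVec (y - fun j => f (Xn j) ω)))) ^ 2
      ≤ 2 * (1 + kSup ^ 2 * opK ^ 2) * (⨆ x' : X, |ftil x' ω - f x' ω|) ^ 2 := by
  intro ω x hx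
  set g : EuclideanSpace ℝ (Fin d) → ℝ := fun z => ftil z ω - f z ω with hg
  set S : ℝ := ⨆ x' : X, |ftil x' ω - f x' ω| with hS
  -- boundedness of the sup defining S
  have hgc : Continuous fun z => |g z| := ((hftc ω).sub (hfc ω)).abs
  have himg : BddAbove ((fun z => |g z|) '' X) := (hX.image hgc).bddAbove
  have hSbdd : BddAbove (Set.range fun x' : X => |ftil x' ω - f x' ω|) := by
    refine BddAbove.mono ?_ himg
    rintro _ ⟨⟨z, hz⟩, rfl⟩
    exact ⟨z, hz, rfl⟩
  have hSle : ∀ z (hz : z ∈ X), |g z| ≤ S := fun z hz =>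
    le_ciSup hSbdd (⟨z, hz⟩ : X)
  have hS0 : 0 ≤ S := le_trans (abs_nonneg _) (hSle x hx)
  -- boundedness of the sup defining kSup
  have hkb : BddAbove
      (Set.range fun p : X × X => |k (p.1 : EuclideanSpace ℝ (Fin d)) (p.2 : EuclideanSpace ℝ (Fin d))|) := by
    have himg2 : BddAbove ((fun q : EuclideanSpace ℝ (Fin d) × EuclideanSpace ℝ (Fin d) =>
        |k q.1 q.2|) '' (X ×ˢ X)) := ((hX.prod hX).image hkcont.abs).bddAbove
    refine BddAbove.mono ?_ himg2
    rintro _ ⟨⟨⟨a, ha⟩, ⟨b, hb⟩⟩, rfl⟩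
    exact ⟨(a, b), ⟨ha, hb⟩, rfl⟩
  have hkle : ∀ (a) (ha : a ∈ X) (b) (hb : b ∈ X), |k a b| ≤ kSup := by
    intro a ha b hb
    rw [hkSup]
    exact le_ciSup hkb ((⟨a, ha⟩, ⟨b, hb⟩) : X × X)
  have hkSup0 : 0 ≤ kSup := le_trans (abs_nonneg _) (hkle x hx x hx)
  -- boundedness of the sup defining opK
  have hopbdd : BddAbove (Set.range fun v : {v : Fin n → ℝ // ∀ i, |v i| ≤ 1} =>
      ∑ i, |K⁻¹.mulVec v i|) := by
    refine ⟨∑ i, ∑ j, |K⁻¹ i j|, ?_⟩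
    rintro _ ⟨⟨v, hv⟩, rfl⟩
    refine Finset.sum_le_sum fun i _ => ?_
    calc |K⁻¹.mulVec v i| ≤ ∑ j, |K⁻¹ i j * v j| := by
          simpa [Matrix.mulVec, dotProduct] using
            Finset.abs_sum_le_sum_abs (fun j => K⁻¹ i j * v j) Finset.univ
      _ ≤ ∑ j, |K⁻¹ i j| := by
          refine Finset.sum_le_sum fun j _ => ?_
          rw [abs_mul]
          exact mul_le_of_le_one_right (abs_nonneg _) (hv j)
  have hople : ∀ (v : Fin n → ℝ), (∀ i, |v i| ≤ 1) → ∑ i, |K⁻¹.mulVec v i| ≤ opK := by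
    intro v hv
    rw [hopK]
    exact le_ciSup hopbdd (⟨v, hv⟩ : {v : Fin n → ℝ // ∀ i, |v i| ≤ 1})
  have hopK0 : 0 ≤ opK := by
    have := hople 0 (by intro i; simp)
    simpa using this
  -- the vector of sample differences
  set v : Fin n → ℝ := fun j => g (Xn j) with hv
  have hvS : ∀ j, |v j| ≤ S := fun j => hSle (Xn j) (hXn j)
  -- key ℓ¹ bound
  have hkey : ∑ i, |K⁻¹.mulVec v i| ≤ S * opK := by
    rcases eq_or_lt_of_le hS0 with hS0' | hS0'
    · have hv0 : v = 0 := by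
        funext j
        have := hvS j
        rw [← hS0'] at this
        exact abs_nonpos_iff.mp this
      simp [hv0, Matrix.mulVec_zero, ← hS0']
    · set w : Fin n → ℝ := fun j => S⁻¹ * v j with hw
      have hw1 : ∀ i, |w i| ≤ 1 := by
        intro i
        rw [hw]
        simp only [abs_mul, abs_inv, abs_of_pos hS0']
        rw [inv_mul_le_iff₀ hS0', mul_one]
        exact hvS i
      have hvw : v = S • w := by
        funext j
        simp only [hw, Pi.smul_apply, smul_eq_mul]
        rw [← mul_assoc, mul_inv_cancel₀ hS0'.ne', one_mul]
      have hmv : ∀ i, K⁻¹.mulVec v i = S * K⁻¹.mulVec w i := by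
        intro i
        rw [hvw, Matrix.mulVec_smul]
        simp
      calc ∑ i, |K⁻¹.mulVec v i| = S * ∑ i, |K⁻¹.mulVec w i| := by
            rw [Finset.mul_sum]
            refine Finset.sum_congr rfl fun i _ => ?_
            rw [hmv i, abs_mul, abs_of_pos hS0']
        _ ≤ S * opK := by
            exact mul_le_mul_of_nonneg_left (hople w hw1) hS0
  -- rewrite the LHS
  set c : Fin n → ℝ := fun i => k x (Xn i) with hc
  have hvec : (y - fun j => ftil (Xn j) ω) = (y - fun j => f (Xn j) ω) - v := by
    funext j
    simp only [Pi.sub_apply, hv, hg]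
    ring
  have hrw : (ftil x ω + dotProduct c (K⁻¹.mulVec (y - fun j => ftil (Xn j) ω)))
        - (f x ω + dotProduct c (K⁻¹.mulVec (y - fun j => f (Xn j) ω)))
      = g x - dotProduct c (K⁻¹.mulVec v) := by
    rw [hvec, Matrix.mulVec_sub, dotProduct_sub]
    simp [hg]
    ring
  rw [hrw]
  -- bound the dot product term
  have hb : |dotProduct c (K⁻¹.mulVec v)| ≤ kSup * (S * opK) := by
    calc |dotProduct c (K⁻¹.mulVec v)| ≤ ∑ i, |c i * K⁻¹.mulVec v i| := by
          simpa [dotProduct] using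
            Finset.abs_sum_le_sum_abs (fun i => c i * K⁻¹.mulVec v i) Finset.univ
      _ ≤ ∑ i, kSup * |K⁻¹.mulVec v i| := by
          refine Finset.sum_le_sum fun i _ => ?_
          rw [abs_mul]
          exact mul_le_mul_of_nonneg_right (hkle x hx (Xn i) (hXn i)) (abs_nonneg _)
      _ = kSup * ∑ i, |K⁻¹.mulVec v i| := by rw [Finset.mul_sum]
      _ ≤ kSup * (S * opK) := mul_le_mul_of_nonneg_left hkey hkSup0
  have ha : |g x| ≤ S := hSle x hx
  have h1 : (g x) ^ 2 ≤ S ^ 2 := by nlinarith [abs_nonneg (g x), sq_abs (g x)]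
  have h2 : (dotProduct c (K⁻¹.mulVec v)) ^ 2 ≤ (kSup * (S * opK)) ^ 2 := by
    nlinarith [abs_nonneg (dotProduct c (K⁻¹.mulVec v)), sq_abs (dotProduct c (K⁻¹.mulVec v)),
      mul_nonneg hkSup0 (mul_nonneg hS0 hopK0)]
  have h2' : (dotProduct c (K⁻¹.mulVec v)) ^ 2 ≤ kSup ^ 2 * opK ^ 2 * S ^ 2 :=
    le_trans h2 (le_of_eq (by ring))
  clear_value g S v c
  have hstep : (g x - dotProduct c (K⁻¹.mulVec v)) ^ 2
      ≤ 2 * (g x) ^ 2 + 2 * (dotProduct c (K⁻¹.mulVec v)) ^ 2 := by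
    nlinarith [sq_nonneg (g x + dotProduct c (K⁻¹.mulVec v))]
  calc (g x - dotProduct c (K⁻¹.mulVec v)) ^ 2
      ≤ 2 * (g x) ^ 2 + 2 * (dotProduct c (K⁻¹.mulVec v)) ^ 2 := hstep
    _ ≤ 2 * S ^ 2 + 2 * (kSup ^ 2 * opK ^ 2 * S ^ 2) := by linarith
    _ = 2 * (1 + kSup ^ 2 * opK ^ 2) * S ^ 2 := by ring
end

section
/- Let X ⊆ M be compact, k a kernel with RKHS H_k, and φ₁,…,φ_ℓ functions each lying locally in H_k on X (i.e., each agrees on X with some ψ_i ∈ H_k). Let f̃(·) = Σ_i w_i φ_i(·) with i.i.d. w_i ~ N(0,1), and let k^{(f|y)}(x,x) = k(x,x) − k(x,X_n)K_{n,n}⁻¹k(X_n,x) be the true noise-free posterior variance. If sup_{x∈X} k^{(f|y)}(x,x) ≤ ε, then sup_{x∈X} k^{(f̃|y)}(x,x) ≤ C₄ ε, where C₄ = ℓ · max_i inf{‖ψ_i‖²_{H_k} : ψ_i|_X = φ_i|_X}. -/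
open MeasureTheory Matrix

/-- **Variance contraction for approximate posteriors.** If the basis functions `φ_i` of
the standard normal Bayesian linear model `f̃` lie locally in the RKHS `H_k`
(with feature map `Kf`, so that `g(x) = ⟪g, Kf x⟫` and `k(x,x') = ⟪Kf x, Kf x'⟫`)
and the true noise-free posterior variance is at most `ε` on `X`, then the
pathwise-updated approximate posterior variance
`k^{(f̃|y)}(x,x) = ∑ᵢ (φᵢ(x) − ξ(x)ᵀφᵢ(X_n))²` is at most `C₄ ε` on `X`, where
`C₄ = ℓ · maxᵢ inf{‖ψᵢ‖² : ψᵢ|_X = φᵢ|_X}`. -/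
theorem approximate_posterior_variance_contraction
    {M H : Type*} [TopologicalSpace M] [NormedAddCommGroup H] [InnerProductSpace ℝ H]
    (X : Set M) (hX : IsCompact X)
    (Kf : M → H) (k : M → M → ℝ)
    (hker : ∀ x x', k x x' = (inner ℝ (Kf x) (Kf x') : ℝ))
    {ℓ n : ℕ} (φ : Fin ℓ → M → ℝ)
    (hloc : ∀ i, ∃ ψ : H, ∀ x ∈ X, (inner ℝ ψ (Kf x) : ℝ) = φ i x)
    (Xn : Fin n → M) (hXn : ∀ j, Xn j ∈ X)
    (K : Matrix (Fin n) (Fin n) ℝ) (hK : K = Matrix.of fun i j => k (Xn i) (Xn j))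
    (hKdet : IsUnit K.det)
    (ξ : M → Fin n → ℝ) (hξ : ξ = fun x => K⁻¹.mulVec fun i => k (Xn i) x)
    (kpost : M → ℝ)
    (hkpost : kpost = fun x => k x x - ∑ i, k x (Xn i) * ξ x i)
    (ktilpost : M → ℝ)
    (hktilpost : ktilpost = fun x => ∑ i, (φ i x - ∑ j, ξ x j * φ i (Xn j)) ^ 2)
    (C₄ : ℝ)
    (hC₄ : C₄ = (ℓ : ℝ) * ⨆ i : Fin ℓ,
      sInf {r : ℝ | ∃ ψ : H, (∀ x ∈ X, (inner ℝ ψ (Kf x) : ℝ) = φ i x) ∧ r = ‖ψ‖ ^ 2})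
    (ε : ℝ) (hε : ∀ x ∈ X, kpost x ≤ ε) :
    ∀ x ∈ X, ktilpost x ≤ C₄ * ε := by

  intro x hx
  -- abbreviations
  set S : Fin ℓ → Set ℝ := fun i =>
    {r : ℝ | ∃ ψ : H, (∀ y ∈ X, (inner ℝ ψ (Kf y) : ℝ) = φ i y) ∧ r = ‖ψ‖ ^ 2} with hS
  have hSne : ∀ i, (S i).Nonempty := by
    intro i
    obtain ⟨ψ, hψ⟩ := hloc i
    exact ⟨‖ψ‖ ^ 2, ψ, hψ, rfl⟩
  have hSbdd : ∀ i, BddBelow (S i) := by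
    intro i
    refine ⟨0, ?_⟩
    rintro r ⟨ψ, -, rfl⟩
    positivity
  have hSInf_nonneg : ∀ i, 0 ≤ sInf (S i) := by
    intro i
    exact le_csInf (hSne i) (by rintro r ⟨ψ, -, rfl⟩; positivity)
  -- the residual feature vector
  set v : H := Kf x - ∑ j, ξ x j • Kf (Xn j) with hv
  have hmul : ∀ j, (∑ j', k (Xn j) (Xn j') * ξ x j') = k (Xn j) x := by
    intro j
    have h1 : K.mulVec (ξ x) = fun i => k (Xn i) x := by
      rw [hξ]
      simp only
      rw [Matrix.mulVec_mulVec, Matrix.mul_nonsing_inv _ hKdet, Matrix.one_mulVec]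
    have := congrFun h1 j
    rw [Matrix.mulVec, dotProduct] at this
    simpa [hK] using this
  have hksymm : ∀ a b, k a b = k b a := by
    intro a b; rw [hker, hker, real_inner_comm]
  have hinner_w : (inner ℝ (Kf x) (∑ j, ξ x j • Kf (Xn j)) : ℝ)
      = ∑ j, k x (Xn j) * ξ x j := by
    rw [inner_sum]
    congr 1; funext j
    rw [real_inner_smul_right, hker]; ring
  have hww : (inner ℝ (∑ j, ξ x j • Kf (Xn j)) (∑ j, ξ x j • Kf (Xn j)) : ℝ)
      = ∑ j, k x (Xn j) * ξ x j := by
    rw [sum_inner]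
    have : ∀ j, (inner ℝ (ξ x j • Kf (Xn j)) (∑ j', ξ x j' • Kf (Xn j')) : ℝ)
        = ξ x j * k (Xn j) x := by
      intro j
      rw [real_inner_smul_left, inner_sum]
      have h2 : ∀ j', (inner ℝ (Kf (Xn j)) (ξ x j' • Kf (Xn j')) : ℝ)
          = k (Xn j) (Xn j') * ξ x j' := by
        intro j'; rw [real_inner_smul_right, hker]; ring
      rw [Finset.sum_congr rfl fun j' _ => h2 j', hmul j]
    rw [Finset.sum_congr rfl fun j _ => this j]
    congr 1; funext j
    rw [hksymm x (Xn j)]; ring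
  have hvv : (inner ℝ v v : ℝ) = kpost x := by
    rw [hv, real_inner_sub_sub_self, hinner_w, hww, hkpost]
    simp only
    rw [← hker]
    ring
  have hP0 : 0 ≤ kpost x := by rw [← hvv]; exact real_inner_self_nonneg
  have hε0 : 0 ≤ ε := le_trans hP0 (hε x hx)
  -- per-index bound
  have key : ∀ i, (φ i x - ∑ j, ξ x j * φ i (Xn j)) ^ 2 ≤ sInf (S i) * kpost x := by
    intro i
    set t : ℝ := φ i x - ∑ j, ξ x j * φ i (Xn j) with ht
    have hbound : ∀ r ∈ S i, t ^ 2 ≤ r * kpost x := by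
      rintro r ⟨ψ, hψ, rfl⟩
      have htv : t = (inner ℝ ψ v : ℝ) := by
        rw [ht, hv, inner_sub_right, inner_sum]
        congr 1
        · exact (hψ x hx).symm
        · congr 1; funext j
          rw [real_inner_smul_right, hψ (Xn j) (hXn j)]
      have hcs : |(inner ℝ ψ v : ℝ)| ≤ ‖ψ‖ * ‖v‖ := abs_real_inner_le_norm ψ v
      have : t ^ 2 ≤ (‖ψ‖ * ‖v‖) ^ 2 := by
        rw [htv, ← sq_abs]
        exact pow_le_pow_left₀ (abs_nonneg _) hcs 2
      calc t ^ 2 ≤ (‖ψ‖ * ‖v‖) ^ 2 := this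
        _ = ‖ψ‖ ^ 2 * (‖v‖ ^ 2) := by ring
        _ = ‖ψ‖ ^ 2 * kpost x := by rw [← hvv, real_inner_self_eq_norm_sq]
    rcases eq_or_lt_of_le hP0 with hP | hP
    · obtain ⟨r, hr⟩ := hSne i
      have := hbound r hr
      rw [← hP] at this ⊢
      simpa using this
    · have h1 : t ^ 2 / kpost x ≤ sInf (S i) := by
        apply le_csInf (hSne i)
        intro r hr
        rw [div_le_iff₀ hP]
        exact hbound r hr
      calc t ^ 2 = t ^ 2 / kpost x * kpost x := by field_simp
        _ ≤ sInf (S i) * kpost x := mul_le_mul_of_nonneg_right h1 hP0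
  rcases Nat.eq_zero_or_pos ℓ with hl | hl
  · subst hl
    rw [hktilpost, hC₄]
    simp
  · have : Nonempty (Fin ℓ) := ⟨⟨0, hl⟩⟩
    set T : ℝ := ⨆ i : Fin ℓ, sInf (S i) with hT
    have hTbdd : BddAbove (Set.range fun i : Fin ℓ => sInf (S i)) :=
      Set.Finite.bddAbove (Set.finite_range _)
    have hle : ∀ i : Fin ℓ, sInf (S i) ≤ T := fun i => le_ciSup hTbdd i
    have hT0 : 0 ≤ T := le_trans (hSInf_nonneg (Classical.arbitrary _)) (hle _)
    have hsum : ktilpost x ≤ (ℓ : ℝ) * T * kpost x := by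
      rw [hktilpost]
      simp only
      calc (∑ i, (φ i x - ∑ j, ξ x j * φ i (Xn j)) ^ 2)
          ≤ ∑ i : Fin ℓ, T * kpost x := by
            apply Finset.sum_le_sum
            intro i _
            exact le_trans (key i) (mul_le_mul_of_nonneg_right (hle i) hP0)
        _ = (ℓ : ℝ) * T * kpost x := by
            rw [Finset.sum_const]
            simp [mul_assoc]
      
    calc ktilpost x ≤ (ℓ : ℝ) * T * kpost x := hsum
      _ ≤ (ℓ : ℝ) * T * ε := by
          apply mul_le_mul_of_nonneg_left (hε x hx)
          positivity
      _ = C₄ * ε := by rw [hC₄, hT, hS]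
end

section
/- Under the assumptions of the variance contraction result, if sup_{x∈X} k^{(f|y)}(x,x) → 0 along a sequence of designs X_n, then sup_{x,x'∈X} |k^{(f̃|y)}(x,x') − k^{(f|y)}(x,x')| → 0. -/
open Matrix Filter

/-- **Uniform convergence of approximate posterior kernels.** Under the variance
contraction assumptions (compact `X`, basis functions lying locally in `H_k`, standard
normal Bayesian linear model), if the true posterior variance converges uniformly to `0`
along a sequence of designs, then the approximate and true posterior kernels converge to
each other uniformly on `X × X`. -/
theorem posterior_kernel_uniform_convergence
    {M H : Type*} [TopologicalSpace M] [NormedAddCommGroup H] [InnerProductSpace ℝ H]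
    (X : Set M) (hX : IsCompact X)
    (Kf : M → H) (k : M → M → ℝ)
    (hker : ∀ x x', k x x' = (inner ℝ (Kf x) (Kf x') : ℝ))
    (hkc : Continuous fun p : M × M => k p.1 p.2)
    {ℓ : ℕ} (φ : Fin ℓ → M → ℝ) (hφc : ∀ i, Continuous (φ i))
    (hloc : ∀ i, ∃ ψ : H, ∀ x ∈ X, (inner ℝ ψ (Kf x) : ℝ) = φ i x)
    (nseq : ℕ → ℕ) (pts : ∀ N, Fin (nseq N) → M) (hpts : ∀ N j, pts N j ∈ X)
    (K : ∀ N, Matrix (Fin (nseq N)) (Fin (nseq N)) ℝ)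
    (hK : ∀ N, K N = Matrix.of fun i j => k (pts N i) (pts N j))
    (hKdet : ∀ N, IsUnit (K N).det)
    (ξ : ∀ N, M → Fin (nseq N) → ℝ)
    (hξ : ∀ N, ξ N = fun x => (K N)⁻¹.mulVec fun i => k (pts N i) x)
    (kpost : ℕ → M → M → ℝ)
    (hkpost : kpost = fun N x x' => k x x' - ∑ i, k x (pts N i) * ξ N x' i)
    (ktilpost : ℕ → M → M → ℝ)
    (hktilpost : ktilpost = fun N x x' =>
      ∑ i, (φ i x - ∑ j, ξ N x j * φ i (pts N j))
          * (φ i x' - ∑ j, ξ N x' j * φ i (pts N j)))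
    (hcontract : Tendsto (fun N => ⨆ x : X, kpost N x x) atTop (nhds 0)) :
    Tendsto (fun N => ⨆ p : X × X, |ktilpost N p.1 p.2 - kpost N p.1 p.2|)
      atTop (nhds 0) := by
  classical
  -- choose the representers ψ i
  choose ψ hψ using hloc
  -- the residual vector
  set r : ∀ N, M → H := fun N x => Kf x - ∑ i, ξ N x i • Kf (pts N i) with hr
  -- interpolation identity: K ξ = k(pts, ·)
  have hξmul : ∀ N (x : M) (i : Fin (nseq N)),
      ∑ j, k (pts N i) (pts N j) * ξ N x j = k (pts N i) x := by
    intro N x i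
    have h1 : (K N).mulVec (ξ N x) = fun i => k (pts N i) x := by
      rw [hξ, Matrix.mulVec_mulVec, Matrix.mul_nonsing_inv _ (hKdet N), Matrix.one_mulVec]
    have h2 := congrFun h1 i
    rw [hK] at h2
    simpa [Matrix.mulVec, dotProduct] using h2
  -- the posterior kernel is the Gram kernel of the residuals
  have hrinner : ∀ N (x x' : M), (inner ℝ (r N x) (r N x') : ℝ) = kpost N x x' := by
    intro N x x'
    simp only [hr, hkpost]
    have hAS : (inner ℝ (Kf x) (∑ i, ξ N x' i • Kf (pts N i)) : ℝ)
        = ∑ i, k x (pts N i) * ξ N x' i := by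
      rw [inner_sum]
      refine Finset.sum_congr rfl fun i _ => ?_
      rw [real_inner_smul_right, ← hker, mul_comm]
    have hSA : (inner ℝ (∑ i, ξ N x i • Kf (pts N i)) (Kf x') : ℝ)
        = ∑ i, ξ N x i * k (pts N i) x' := by
      rw [sum_inner]
      refine Finset.sum_congr rfl fun i _ => ?_
      rw [real_inner_smul_left, ← hker]
    have hSS : (inner ℝ (∑ i, ξ N x i • Kf (pts N i)) (∑ i, ξ N x' i • Kf (pts N i)) : ℝ)
        = ∑ i, ξ N x i * k (pts N i) x' := by
      rw [sum_inner]
      refine Finset.sum_congr rfl fun i _ => ?_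
      rw [real_inner_smul_left, inner_sum]
      congr 1
      rw [← hξmul N x' i]
      refine Finset.sum_congr rfl fun j _ => ?_
      rw [real_inner_smul_right, ← hker, mul_comm]
    rw [inner_sub_left, inner_sub_right, inner_sub_right, hAS, hSA, hSS, ← hker]
    ring
  have hknn : ∀ N x, 0 ≤ kpost N x x := by
    intro N x; rw [← hrinner]; exact real_inner_self_nonneg
  have hnorm : ∀ N x, ‖r N x‖ = Real.sqrt (kpost N x x) := by
    intro N x
    rw [← hrinner, real_inner_self_eq_norm_sq, Real.sqrt_sq (norm_nonneg _)]
  have hBrep : ∀ N, ∀ x ∈ X, ∀ i, (inner ℝ (ψ i) (r N x) : ℝ)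
      = φ i x - ∑ j, ξ N x j * φ i (pts N j) := by
    intro N x hx i
    simp only [hr]
    rw [inner_sub_right, inner_sum, hψ i x hx]
    congr 1
    refine Finset.sum_congr rfl fun j _ => ?_
    rw [real_inner_smul_right, hψ i _ (hpts N j)]
  have hktil : ∀ N, ∀ x ∈ X, ∀ x' ∈ X, ktilpost N x x'
      = ∑ i, (inner ℝ (ψ i) (r N x) : ℝ) * (inner ℝ (ψ i) (r N x') : ℝ) := by
    intro N x hx x' hx'
    simp only [hktilpost]
    exact Finset.sum_congr rfl fun i _ => by
      rw [hBrep N x hx i, hBrep N x' hx' i]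
  set C : ℝ := 1 + ∑ i, ‖ψ i‖ ^ 2 with hCdef
  have hC0 : 0 ≤ C := by
    have : 0 ≤ ∑ i, ‖ψ i‖ ^ 2 := Finset.sum_nonneg fun i _ => sq_nonneg _
    linarith
  -- key pointwise estimate
  have hest : ∀ N, ∀ x ∈ X, ∀ x' ∈ X,
      |ktilpost N x x' - kpost N x x'|
        ≤ C * (Real.sqrt (kpost N x x) * Real.sqrt (kpost N x' x')) := by
    intro N x hx x' hx'
    have h1 : |kpost N x x'| ≤ ‖r N x‖ * ‖r N x'‖ := by
      rw [← hrinner]; exact abs_real_inner_le_norm _ _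
    have h2 : |ktilpost N x x'| ≤ (∑ i, ‖ψ i‖ ^ 2) * (‖r N x‖ * ‖r N x'‖) := by
      rw [hktil N x hx x' hx']
      calc |∑ i, (inner ℝ (ψ i) (r N x) : ℝ) * (inner ℝ (ψ i) (r N x') : ℝ)|
          ≤ ∑ i, |(inner ℝ (ψ i) (r N x) : ℝ) * (inner ℝ (ψ i) (r N x') : ℝ)| :=
            Finset.abs_sum_le_sum_abs _ _
        _ ≤ ∑ i, ‖ψ i‖ ^ 2 * (‖r N x‖ * ‖r N x'‖) := by
            refine Finset.sum_le_sum fun i _ => ?_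
            rw [abs_mul]
            nlinarith [abs_real_inner_le_norm (ψ i) (r N x),
              abs_real_inner_le_norm (ψ i) (r N x'),
              abs_nonneg ((inner ℝ (ψ i) (r N x) : ℝ)),
              abs_nonneg ((inner ℝ (ψ i) (r N x') : ℝ)),
              norm_nonneg (ψ i), norm_nonneg (r N x), norm_nonneg (r N x')]
        _ = (∑ i, ‖ψ i‖ ^ 2) * (‖r N x‖ * ‖r N x'‖) := by rw [Finset.sum_mul]
    have h3 : |ktilpost N x x' - kpost N x x'| ≤ |ktilpost N x x'| + |kpost N x x'| :=
      abs_sub _ _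
    rw [← hnorm, ← hnorm, hCdef]
    nlinarith [h1, h2, h3]
  -- continuity of the diagonal posterior variance
  have hξc : ∀ N i, Continuous fun x => ξ N x i := by
    intro N i
    simp only [hξ, Matrix.mulVec, dotProduct]
    exact continuous_finset_sum _ fun j _ =>
      continuous_const.mul (hkc.comp (continuous_const.prodMk continuous_id))
  have hkxx : ∀ N, ContinuousOn (fun x => kpost N x x) X := by
    intro N
    apply Continuous.continuousOn
    simp only [hkpost]
    exact (hkc.comp (continuous_id.prodMk continuous_id)).sub
      (continuous_finset_sum _ fun i _ =>
        (hkc.comp (continuous_id.prodMk continuous_const)).mul (hξc N i))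
  have hbdd : ∀ N, BddAbove (Set.range fun x : X => kpost N x x) := by
    intro N
    have := (hX.image_of_continuousOn (hkxx N)).bddAbove
    rwa [Set.image_eq_range] at this
  set S : ℕ → ℝ := fun N => ⨆ x : X, kpost N x x with hSdef
  have hSle : ∀ N, ∀ x ∈ X, kpost N x x ≤ S N := by
    intro N x hx
    exact le_ciSup (hbdd N) ⟨x, hx⟩
  have hF0 : ∀ N, 0 ≤ ⨆ p : X × X, |ktilpost N p.1 p.2 - kpost N p.1 p.2| :=
    fun N => Real.iSup_nonneg fun p => abs_nonneg _
  have hFle : ∀ N, (⨆ p : X × X, |ktilpost N p.1 p.2 - kpost N p.1 p.2|) ≤ C * S N := by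
    intro N
    by_cases hne : Nonempty X
    · have hSnn : 0 ≤ S N :=
        le_trans (hknn N hne.some) (hSle N hne.some hne.some.2)
      refine ciSup_le fun p => ?_
      obtain ⟨⟨x, hx⟩, ⟨x', hx'⟩⟩ := p
      refine (hest N x hx x' hx').trans ?_
      have hsq : Real.sqrt (kpost N x x) * Real.sqrt (kpost N x' x') ≤ S N := by
        calc Real.sqrt (kpost N x x) * Real.sqrt (kpost N x' x')
            ≤ Real.sqrt (S N) * Real.sqrt (S N) :=
              mul_le_mul (Real.sqrt_le_sqrt (hSle N x hx)) (Real.sqrt_le_sqrt (hSle N x' hx'))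
                (Real.sqrt_nonneg _) (Real.sqrt_nonneg _)
          _ = S N := Real.mul_self_sqrt hSnn
      exact mul_le_mul_of_nonneg_left hsq hC0
    · have hempty : IsEmpty (X × X) := by
        rw [not_nonempty_iff] at hne
        infer_instance
      have hS0 : S N = 0 := by
        rw [not_nonempty_iff] at hne
        simp [hSdef]
      rw [Real.iSup_of_isEmpty, hS0, mul_zero]
  have hCS : Tendsto (fun N => C * S N) atTop (nhds 0) := by
    have := hcontract.const_mul C
    simpa using this
  exact tendsto_of_tendsto_of_tendsto_of_le_of_le tendsto_const_nhds hCS hF0 hFle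
end

section
/- Let f̃ ~ GP(0, δ) where δ is the Kronecker delta kernel (δ(x,x') = 1 if x = x', 0 otherwise). For test points X_* disjoint from training points X_n, the covariance of the pathwise-updated vector f̃(X_*) + k(X_*,X_n)K_{n,n}⁻¹(y − f̃(X_n)) equals I + K_{*,n} K_{n,n}⁻² K_{n,*}; in particular every diagonal entry (posterior variance) is at least 1. -/
open MeasureTheory Matrix

/-- **Misspecified prior counterexample.** If `f̃ ~ GP(0, δ)` has the Kronecker delta
kernel (independent standard normal values at distinct points), and the test points `X_*`
are disjoint from the training points `X_n`, then the covariance of the pathwise-updated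
vector `f̃(X_*) + K_{*,n}K⁻¹(y − f̃(X_n))` equals `I + K_{*,n} K⁻² K_{n,*}`; in particular
every posterior variance is at least `1`. -/
theorem kronecker_delta_prior_no_contraction
    {M : Type*} [DecidableEq M]
    {Ω : Type*} [MeasurableSpace Ω] (P : Measure Ω) [IsProbabilityMeasure P]
    (ftil : M → Ω → ℝ)
    (hint1 : ∀ x, Integrable (ftil x) P)
    (hint2 : ∀ x x', Integrable (fun ω => ftil x ω * ftil x' ω) P)
    (hcen : ∀ x, ∫ ω, ftil x ω ∂P = 0)
    (hdelta : ∀ x x', ∫ ω, ftil x ω * ftil x' ω ∂P = if x = x' then (1 : ℝ) else 0)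
    (k : M → M → ℝ) (hksymm : ∀ x x', k x x' = k x' x)
    {n s : ℕ} (Xn : Fin n → M) (Xs : Fin s → M)
    (hXn : Function.Injective Xn) (hXs : Function.Injective Xs)
    (hdisj : ∀ i j, Xs i ≠ Xn j)
    (K : Matrix (Fin n) (Fin n) ℝ) (hK : K = Matrix.of fun i j => k (Xn i) (Xn j))
    (hKdet : IsUnit K.det)
    (Ksn : Matrix (Fin s) (Fin n) ℝ) (hKsn : Ksn = Matrix.of fun i j => k (Xs i) (Xn j))
    (y : Fin n → ℝ)
    (U : Ω → Fin s → ℝ)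
    (hU : U = fun ω => (fun i => ftil (Xs i) ω)
        + (Ksn * K⁻¹).mulVec (y - fun j => ftil (Xn j) ω))
    (mU : Fin s → ℝ) (hmU : mU = fun i => ∫ ω, U ω i ∂P) :
    (Matrix.of fun i j => ∫ ω, (U ω i - mU i) * (U ω j - mU j) ∂P)
        = (1 : Matrix (Fin s) (Fin s) ℝ) + Ksn * K⁻¹ * K⁻¹ * Ksnᵀ
    ∧ ∀ i, (1 : ℝ) ≤ ∫ ω, (U ω i - mU i) ^ 2 ∂P := by

  set A := Ksn * K⁻¹ with hAdef
  -- integrability lemmas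
  have hSint : ∀ (c : Fin n → ℝ), Integrable (fun ω => ∑ l, c l * ftil (Xn l) ω) P :=
    fun c => integrable_finset_sum _ fun l _ => (hint1 (Xn l)).const_mul _
  have hxSint : ∀ (x : M) (c : Fin n → ℝ),
      Integrable (fun ω => ftil x ω * ∑ l, c l * ftil (Xn l) ω) P := by
    intro x c
    have e : (fun ω => ftil x ω * ∑ l, c l * ftil (Xn l) ω)
        = fun ω => ∑ l, c l * (ftil x ω * ftil (Xn l) ω) := by
      funext ω; rw [Finset.mul_sum]; exact Finset.sum_congr rfl fun l _ => by ring
    rw [e]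
    exact integrable_finset_sum _ fun l _ => (hint2 x (Xn l)).const_mul _
  have hSSint : ∀ (c d : Fin n → ℝ),
      Integrable (fun ω => (∑ l, c l * ftil (Xn l) ω) * (∑ m, d m * ftil (Xn m) ω)) P := by
    intro c d
    have e : (fun ω => (∑ l, c l * ftil (Xn l) ω) * (∑ m, d m * ftil (Xn m) ω))
        = fun ω => ∑ l, ∑ m, (c l * d m) * (ftil (Xn l) ω * ftil (Xn m) ω) := by
      funext ω; rw [Finset.sum_mul_sum]
      exact Finset.sum_congr rfl fun l _ => Finset.sum_congr rfl fun m _ => by ring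
    rw [e]
    exact integrable_finset_sum _ fun l _ =>
      integrable_finset_sum _ fun m _ => (hint2 (Xn l) (Xn m)).const_mul _
  -- integral values
  have hxSval : ∀ (x : M) (c : Fin n → ℝ),
      ∫ ω, ftil x ω * ∑ l, c l * ftil (Xn l) ω ∂P
        = ∑ l, c l * (if x = Xn l then (1:ℝ) else 0) := by
    intro x c
    have e : (fun ω => ftil x ω * ∑ l, c l * ftil (Xn l) ω)
        = fun ω => ∑ l, c l * (ftil x ω * ftil (Xn l) ω) := by
      funext ω; rw [Finset.mul_sum]; exact Finset.sum_congr rfl fun l _ => by ring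
    rw [e, integral_finset_sum _ fun l _ => (hint2 x (Xn l)).const_mul _]
    exact Finset.sum_congr rfl fun l _ => by rw [integral_const_mul, hdelta]
  have hSSval : ∀ (c d : Fin n → ℝ),
      ∫ ω, (∑ l, c l * ftil (Xn l) ω) * (∑ m, d m * ftil (Xn m) ω) ∂P
        = ∑ l, c l * d l := by
    intro c d
    have e : (fun ω => (∑ l, c l * ftil (Xn l) ω) * (∑ m, d m * ftil (Xn m) ω))
        = fun ω => ∑ l, ∑ m, (c l * d m) * (ftil (Xn l) ω * ftil (Xn m) ω) := by
      funext ω; rw [Finset.sum_mul_sum]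
      exact Finset.sum_congr rfl fun l _ => Finset.sum_congr rfl fun m _ => by ring
    rw [e, integral_finset_sum _ fun l _ =>
      integrable_finset_sum _ fun m _ => (hint2 (Xn l) (Xn m)).const_mul _]
    have : ∀ l : Fin n, ∫ ω, ∑ m, (c l * d m) * (ftil (Xn l) ω * ftil (Xn m) ω) ∂P
        = c l * d l := by
      intro l
      rw [integral_finset_sum _ fun m _ => (hint2 (Xn l) (Xn m)).const_mul _]
      have : ∀ m : Fin n, ∫ ω, (c l * d m) * (ftil (Xn l) ω * ftil (Xn m) ω) ∂P
          = if l = m then c l * d m else 0 := by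
        intro m
        rw [integral_const_mul, hdelta]
        simp [hXn.eq_iff]
      simp only [this]
      simp
    simp only [this]
  -- rewrite U
  have hUeq : ∀ i ω, U ω i
      = ftil (Xs i) ω + (∑ l, A i l * y l) - ∑ l, A i l * ftil (Xn l) ω := by
    intro i ω
    rw [hU]
    simp only [Pi.add_apply, Matrix.mulVec, dotProduct, Pi.sub_apply]
    rw [add_sub_assoc, ← Finset.sum_sub_distrib]
    exact congrArg _ (Finset.sum_congr rfl fun l _ => by ring)
  have hmUeq : ∀ i, mU i = ∑ l, A i l * y l := by
    intro i
    rw [hmU]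
    show ∫ ω, U ω i ∂P = ∑ l, A i l * y l
    have e : (fun ω => U ω i)
        = fun ω => ftil (Xs i) ω + (∑ l, A i l * y l) - ∑ l, A i l * ftil (Xn l) ω := by
      funext ω; exact hUeq i ω
    have Ia : Integrable (fun ω => ftil (Xs i) ω + ∑ l, A i l * y l) P :=
      (hint1 _).add (integrable_const _)
    rw [e, integral_sub Ia (hSint _),
      integral_add (hint1 _) (integrable_const _), hcen, integral_const,
      integral_finset_sum _ fun l _ => (hint1 (Xn l)).const_mul _]
    simp [integral_const_mul, hcen]
  have hg : ∀ i ω, U ω i - mU i = ftil (Xs i) ω - ∑ l, A i l * ftil (Xn l) ω := by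
    intro i ω; rw [hUeq, hmUeq]; ring
  -- covariance entries
  have hcov : ∀ i j, ∫ ω, (U ω i - mU i) * (U ω j - mU j) ∂P
      = (if i = j then (1:ℝ) else 0) + ∑ l, A i l * A j l := by
    intro i j
    have e : (fun ω => (U ω i - mU i) * (U ω j - mU j))
        = fun ω => ftil (Xs i) ω * ftil (Xs j) ω
            - ftil (Xs i) ω * ∑ l, A j l * ftil (Xn l) ω
            - ftil (Xs j) ω * ∑ l, A i l * ftil (Xn l) ω
            + (∑ l, A i l * ftil (Xn l) ω) * (∑ m, A j m * ftil (Xn m) ω) := by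
      funext ω; rw [hg, hg]; ring
    have I12 : Integrable (fun ω => ftil (Xs i) ω * ftil (Xs j) ω
        - ftil (Xs i) ω * ∑ l, A j l * ftil (Xn l) ω) P :=
      (hint2 _ _).sub (hxSint _ _)
    have I123 : Integrable (fun ω => ftil (Xs i) ω * ftil (Xs j) ω
        - ftil (Xs i) ω * ∑ l, A j l * ftil (Xn l) ω
        - ftil (Xs j) ω * ∑ l, A i l * ftil (Xn l) ω) P :=
      I12.sub (hxSint _ _)
    rw [e, integral_add I123 (hSSint _ _),
      integral_sub I12 (hxSint _ _),
      integral_sub (hint2 _ _) (hxSint _ _),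
      hdelta, hxSval, hxSval, hSSval]
    have h1 : (∑ l, A j l * (if Xs i = Xn l then (1:ℝ) else 0)) = 0 := by
      simp [hdisj]
    have h2 : (∑ l, A i l * (if Xs j = Xn l then (1:ℝ) else 0)) = 0 := by
      simp [hdisj]
    have h3 : (if Xs i = Xs j then (1:ℝ) else 0) = if i = j then 1 else 0 := by
      simp [hXs.eq_iff]
    rw [h1, h2, h3]; ring
  -- matrix identity
  have hKsym : Kᵀ = K := by
    rw [hK]; ext i j; simp [hksymm]
  have hKinvsym : (K⁻¹)ᵀ = K⁻¹ := by
    rw [Matrix.transpose_nonsing_inv, hKsym]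
  have hM : Ksn * K⁻¹ * K⁻¹ * Ksnᵀ = A * Aᵀ := by
    rw [hAdef, Matrix.transpose_mul, hKinvsym]
    rw [Matrix.mul_assoc]
  constructor
  · ext i j
    rw [Matrix.of_apply, hcov, hM, Matrix.add_apply, Matrix.one_apply,
      Matrix.mul_apply]
    simp [Matrix.transpose_apply]
  · intro i
    have e : (fun ω => (U ω i - mU i) ^ 2)
        = fun ω => (U ω i - mU i) * (U ω i - mU i) := by
      funext ω; ring
    rw [e, hcov, if_pos rfl]
    have : (0:ℝ) ≤ ∑ l, A i l * A i l :=
      Finset.sum_nonneg fun l _ => mul_self_nonneg _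
    linarith
end
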